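/- For every positive integer b, 4/(56b+33) = 1/(2(7b+5)) + 1/((b+1)(7b+5)(56b+33)) + 1/(2(b+1)(56b+33)); hence the Erdős–Straus equation has a solution for all n ≡ 33 (mod 56) with n ≥ 89. -/
import Mathlib

lemma key (b : ℕ) :
    (4 : ℚ) / (56 * b + 33) =
      1 / (2 * (7 * b + 5)) + 1 / ((b + 1) * (7 * b + 5) * (56 * b + 33))
        + 1 / (2 * (b + 1) * (56 * b + 33)) := by
  have h1 : ((56 : ℚ) * b + 33) ≠ 0 := by positivity
  have h2 : ((7 : ℚ) * b + 5) ≠ 0 := by positivity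
  have h3 : ((b : ℚ) + 1) ≠ 0 := by positivity
  field_simp
  ring

theorem stmt_11 (b : ℕ) (hb : 1 ≤ b) :
    (4 : ℚ) / (56 * b + 33) =
      1 / (2 * (7 * b + 5)) + 1 / ((b + 1) * (7 * b + 5) * (56 * b + 33))
        + 1 / (2 * (b + 1) * (56 * b + 33)) ∧
    ∀ n : ℕ, 89 ≤ n → n % 56 = 33 →
      ∃ x y z : ℕ, 0 < x ∧ 0 < y ∧ 0 < z ∧
        (4 : ℚ) / n = 1 / x + 1 / y + 1 / z := by
  refine ⟨key b, ?_⟩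
  intro n hn hmod
  obtain ⟨c, hc⟩ : ∃ c, n = 56 * c + 33 := ⟨n / 56, by omega⟩
  refine ⟨2 * (7 * c + 5), (c + 1) * (7 * c + 5) * (56 * c + 33),
    2 * (c + 1) * (56 * c + 33), by positivity, by positivity, by positivity, ?_⟩
  subst hc
  have := key c
  push_cast at this ⊢
  convert this using 2 <;> push_cast <;> ring
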